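/- For every prime power q and every integer d ≥ 1: if d < 2q then n_q(2,d,1) = 2⌈d/2⌉ + 2, and if d ≥ 2q then n_q(2,d,1) = d + ⌈d/q⌉. -/

import Mathlib

open scoped Classical

/-- The Hamming weight of a vector: the number of nonzero coordinates. -/
noncomputable def hamWt {F : Type} [Field F] {n : ℕ} (c : Fin n → F) : ℕ :=
  (Finset.univ.filter fun i => c i ≠ 0).card

/-- `C` is a linear `[n,k,d]` code over `F`: a `k`-dimensional subspace of `F^n`
in which every nonzero codeword has Hamming weight at least `d`. -/
def IsCode {F : Type} [Field F] {n : ℕ} (k d : ℕ) (C : Submodule F (Fin n → F)) : Prop :=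
  Module.finrank F ↥C = k ∧ ∀ c ∈ C, c ≠ 0 → d ≤ hamWt c

/-- `C ⊆ F^n` has locality `r`: every coordinate `i` has a recovery set `S` of at most `r`
other coordinates such that any two codewords agreeing on `S` agree at `i`. -/
def HasLocality {F : Type} [Field F] {n : ℕ} (C : Submodule F (Fin n → F)) (r : ℕ) : Prop :=
  ∀ i : Fin n, ∃ S : Finset (Fin n), i ∉ S ∧ S.card ≤ r ∧
    ∀ c ∈ C, ∀ c' ∈ C, (∀ j ∈ S, c j = c' j) → c i = c' i

/-- There exists a linear `[n,k,d]_q` code (over some field with `q` elements). -/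
def CodeExists (q n k d : ℕ) : Prop :=
  ∃ (F : Type) (_ : Field F), Nat.card F = q ∧
    ∃ C : Submodule F (Fin n → F), IsCode k d C

/-- There exists a linear `[n,k,d]_q` code with locality `r`. -/
def LRCExists (q n k d r : ℕ) : Prop :=
  ∃ (F : Type) (_ : Field F), Nat.card F = q ∧
    ∃ C : Submodule F (Fin n → F), IsCode k d C ∧ HasLocality C r

/-- `n_q(k,d)`: the smallest length of a linear `[n,k,d]_q` code. -/
noncomputable def nCode (q k d : ℕ) : ℕ := sInf {n | CodeExists q n k d}

/-- `n_q(k,d,r)`: the smallest length of a linear `[n,k,d]_q` code with locality `r`. -/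
noncomputable def nLRC (q k d r : ℕ) : ℕ := sInf {n | LRCExists q n k d r}

/-- There exists an `[n,k]_q` code with locality `r` (no condition on minimum distance). -/
def LRCExistsNoDist (q n k r : ℕ) : Prop :=
  ∃ (F : Type) (_ : Field F), Nat.card F = q ∧
    ∃ C : Submodule F (Fin n → F), Module.finrank F ↥C = k ∧ HasLocality C r

/-- `n'_q(k,r)`: the smallest length of an `[n,k]_q` code with locality `r`. -/
noncomputable def nLRCNoDist (q k r : ℕ) : ℕ := sInf {n | LRCExistsNoDist q n k r}

/-- The dual code of `C`. -/
def dualCode {F : Type} [Field F] {n : ℕ} (C : Submodule F (Fin n → F)) : Set (Fin n → F) :=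
  {x | ∀ c ∈ C, ∑ j, x j * c j = 0}

/-- `C` is projective: non-degenerate and no two coordinates are proportional. -/
def IsProjective {F : Type} [Field F] {n : ℕ} (C : Submodule F (Fin n → F)) : Prop :=
  (∀ i : Fin n, ∃ c ∈ C, c i ≠ 0) ∧
    (∀ i j : Fin n, i ≠ j → ∀ lam : F, lam ≠ 0 → ∃ c ∈ C, c i ≠ lam * c j)

/-- The Griesmer bound `g_q(k,d) = ∑_{i=0}^{k-1} ⌈d/q^i⌉`. -/
noncomputable def griesmer (q k d : ℕ) : ℕ :=
  ∑ i ∈ Finset.range k, ⌈(d : ℚ) / (q : ℚ) ^ i⌉₊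

lemma myConstruction {F : Type} [Field F] [Fintype F] (q : ℕ) (hF : Fintype.card F = q)
    {n M : ℕ} (hM : M ≤ q + 1) (g : Fin n → Fin M) (d : ℕ) (hdn : d ≤ n)
    (hpair : ∀ i : Fin n, ∃ j : Fin n, j ≠ i ∧ g j = g i)
    (hmult : ∀ t : Fin M, (Finset.univ.filter fun i => g i = t).card ≤ n - d)
    (hspan : ∃ i j : Fin n, g i ≠ g j) :
    ∃ C : Submodule F (Fin n → F), IsCode 2 d C ∧ HasLocality C 1 := by
  classical
  -- embed the points into the projective line
  have hcard : Fintype.card (Fin M) ≤ Fintype.card (Option F) := by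
    simpa [hF] using hM
  obtain ⟨e⟩ := Function.Embedding.nonempty_of_card_le hcard
  set pt : Fin M → F × F := fun t => Option.elim (e t) (0, 1) (fun x => (1, x)) with hpt
  have hkey : ∀ (v : Fin 2 → F) (t s : Fin M), t ≠ s →
      v 0 * (pt t).1 + v 1 * (pt t).2 = 0 →
      v 0 * (pt s).1 + v 1 * (pt s).2 = 0 → v = 0 := by
    intro v t s hts h1 h2
    have hes : e t ≠ e s := fun h => hts (e.injective h)
    have hv : v 0 = 0 ∧ v 1 = 0 := by
      rcases het : e t with _ | x <;> rcases hesn : e s with _ | y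
      · exact absurd (het.trans hesn.symm) hes
      · rw [hpt] at h1 h2; simp only [het, hesn, Option.elim] at h1 h2
        simp only [mul_zero, mul_one, zero_add] at h1
        constructor
        · have := h2; rw [h1] at this; simpa using this
        · exact h1
      · rw [hpt] at h1 h2; simp only [het, hesn, Option.elim] at h1 h2
        simp only [mul_zero, mul_one, zero_add] at h2
        constructor
        · have := h1; rw [h2] at this; simpa using this
        · exact h2
      · rw [hpt] at h1 h2; simp only [het, hesn, Option.elim] at h1 h2
        simp only [mul_one] at h1 h2
        have hxy : x ≠ y := by
          intro h; exact hes (by rw [het, hesn, h])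
        have h3 : v 1 * (x - y) = 0 := by ring_nf; linear_combination h1 - h2
        have hv1 : v 1 = 0 := by
          rcases mul_eq_zero.mp h3 with h | h
          · exact h
          · exact absurd (sub_eq_zero.mp h) hxy
        refine ⟨?_, hv1⟩
        have := h1; rw [hv1] at this; simpa using this
    funext k
    have h2' : (2 : ℕ) = 2 := rfl
    rcases k with ⟨kv, hk⟩
    interval_cases kv
    · exact hv.1
    · exact hv.2
  -- the generator map
  set G : (Fin 2 → F) →ₗ[F] (Fin n → F) :=
    { toFun := fun v i => v 0 * (pt (g i)).1 + v 1 * (pt (g i)).2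
      map_add' := by intro a b; funext i; simp [Pi.add_apply]; ring
      map_smul' := by intro c a; funext i; simp [Pi.smul_apply, smul_eq_mul]; ring } with hG
  have hGapp : ∀ (v : Fin 2 → F) (i : Fin n),
      G v i = v 0 * (pt (g i)).1 + v 1 * (pt (g i)).2 := fun _ _ => rfl
  have hinj : Function.Injective G := by
    have hzero : ∀ v, G v = 0 → v = 0 := by
      intro v hv
      obtain ⟨i, j, hij⟩ := hspan
      have h1 : G v i = 0 := by rw [hv]; rfl
      have h2 : G v j = 0 := by rw [hv]; rfl
      exact hkey v (g i) (g j) hij h1 h2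
    intro a b hab
    have : G (a - b) = 0 := by rw [map_sub, hab, sub_self]
    have := hzero _ this
    exact sub_eq_zero.mp this
  refine ⟨LinearMap.range G, ⟨?_, ?_⟩, ?_⟩
  · rw [LinearMap.finrank_range_of_inj hinj, Module.finrank_fin_fun]
  · rintro c ⟨v, rfl⟩ hc
    have hv : v ≠ 0 := by rintro rfl; exact hc (map_zero G)
    have hZ : (Finset.univ.filter fun i => G v i = 0).card ≤ n - d := by
      rcases Finset.eq_empty_or_nonempty (Finset.univ.filter fun i => G v i = 0) with h | ⟨i₀, hi₀⟩
      · rw [h]; simp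
      · have hgi₀ : G v i₀ = 0 := (Finset.mem_filter.mp hi₀).2
        have hsub : (Finset.univ.filter fun i => G v i = 0) ⊆
            (Finset.univ.filter fun i => g i = g i₀) := by
          intro i hi
          have hgi : G v i = 0 := (Finset.mem_filter.mp hi).2
          simp only [Finset.mem_filter, Finset.mem_univ, true_and]
          by_contra hne
          exact hv (hkey v (g i) (g i₀) hne hgi hgi₀)
        exact le_trans (Finset.card_le_card hsub) (hmult (g i₀))
    have hsplit := Finset.card_filter_add_card_filter_not
      (s := (Finset.univ : Finset (Fin n))) (p := fun i => G v i ≠ 0)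
    have : (Finset.univ.filter fun i => ¬ G v i ≠ 0) =
        (Finset.univ.filter fun i => G v i = 0) := by
      apply Finset.filter_congr; intro i _; simp
    rw [this] at hsplit
    simp only [Finset.card_univ, Fintype.card_fin] at hsplit
    unfold hamWt
    omega
  · intro i
    obtain ⟨j, hji, hgj⟩ := hpair i
    refine ⟨{j}, ?_, by simp, ?_⟩
    · simp [hji.symm]
    · rintro c ⟨v, rfl⟩ c' ⟨v', rfl⟩ h
      have hj := h j (Finset.mem_singleton_self j)
      have h1 : G v i = G v j := by rw [hGapp, hGapp, hgj]
      have h2 : G v' i = G v' j := by rw [hGapp, hGapp, hgj]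
      rw [h1, h2, hj]


section LB
variable {F : Type} [Field F] {n : ℕ}

/-- the evaluation functional at coordinate `i` -/
noncomputable def evC (C : Submodule F (Fin n → F)) (i : Fin n) : ↥C →ₗ[F] F :=
  (LinearMap.proj i).comp C.subtype

lemma evC_apply (C : Submodule F (Fin n → F)) (i : Fin n) (v : ↥C) :
    evC C i v = (v : Fin n → F) i := rfl

lemma loc_dichotomy (C : Submodule F (Fin n → F)) (hl : HasLocality C 1) (i : Fin n) :
    (∀ c ∈ C, c i = 0) ∨ ∃ j, j ≠ i ∧ ∀ c ∈ C, c j = 0 → c i = 0 := by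
  obtain ⟨S, hiS, hcard, hrec⟩ := hl i
  rcases Finset.eq_empty_or_nonempty S with hS | hS
  · left
    intro c hc
    have := hrec c hc 0 C.zero_mem (by simp [hS])
    simpa using this
  · have hcard1 : S.card = 1 := le_antisymm hcard (Finset.card_pos.mpr hS)
    obtain ⟨j, hSj⟩ := Finset.card_eq_one.mp hcard1
    right
    refine ⟨j, ?_, ?_⟩
    · intro h; subst h; exact hiS (by simp [hSj])
    · intro c hc hcj
      have harg : ∀ j' ∈ S, c j' = (0 : Fin n → F) j' := by
        intro j' hj'
        rw [hSj, Finset.mem_singleton] at hj'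
        subst hj'
        simpa using hcj
      have := hrec c hc 0 C.zero_mem harg
      simpa using this

lemma exists_nondeg (C : Submodule F (Fin n → F)) {d : ℕ} (hC : IsCode 2 d C) :
    ∃ i : Fin n, ∃ c ∈ C, c i ≠ 0 := by
  by_contra h
  push_neg at h
  have hbot : C = ⊥ := by
    rw [Submodule.eq_bot_iff]
    intro c hc
    funext i
    exact h i c hc
  have := hC.1
  rw [hbot] at this
  simp [finrank_bot] at this

lemma fd_of_code (C : Submodule F (Fin n → F)) {d : ℕ} (hC : IsCode 2 d C) :
    FiniteDimensional F ↥C :=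
  FiniteDimensional.of_finrank_pos (by rw [hC.1]; norm_num)

lemma ker_ev_nonzero (C : Submodule F (Fin n → F)) {d : ℕ} (hC : IsCode 2 d C) (j : Fin n) :
    ∃ c ∈ C, c ≠ 0 ∧ c j = 0 := by
  haveI := fd_of_code C hC
  have hrn := LinearMap.finrank_range_add_finrank_ker (evC C j)
  rw [hC.1] at hrn
  have hr1 : Module.finrank F ↥(LinearMap.range (evC C j)) ≤ 1 := by
    have := Submodule.finrank_le (LinearMap.range (evC C j))
    simpa [Module.finrank_self] using this
  have hker : LinearMap.ker (evC C j) ≠ ⊥ := by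
    intro hbot
    rw [hbot] at hrn
    simp [finrank_bot] at hrn
    omega
  obtain ⟨v, hv, hv0⟩ := Submodule.ne_bot_iff _ |>.mp hker
  refine ⟨(v : Fin n → F), v.2, ?_, hv⟩
  · simpa using hv0

lemma lb_common {d : ℕ} (C : Submodule F (Fin n → F))
    (hC : IsCode 2 d C) (hl : HasLocality C 1) : d + 2 ≤ n := by
  obtain ⟨i₀, c₀, hc₀, hc₀i⟩ := exists_nondeg C hC
  rcases loc_dichotomy C hl i₀ with h | ⟨j, hji, himp⟩
  · exact absurd (h c₀ hc₀) hc₀i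
  obtain ⟨c, hcC, hc0, hcj⟩ := ker_ev_nonzero C hC j
  have hci₀ : c i₀ = 0 := himp c hcC hcj
  have hd := hC.2 c hcC hc0
  have hsub : ({i₀, j} : Finset (Fin n)) ⊆ Finset.univ.filter fun i => c i = 0 := by
    intro i hi
    simp only [Finset.mem_insert, Finset.mem_singleton] at hi
    rcases hi with rfl | rfl <;> simp [hci₀, hcj]
  have hcard2 : ({i₀, j} : Finset (Fin n)).card = 2 := by
    rw [Finset.card_insert_of_notMem (by simpa using hji.symm), Finset.card_singleton]
  have h2 : 2 ≤ (Finset.univ.filter fun i => c i = 0).card := by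
    rw [← hcard2]; exact Finset.card_le_card hsub
  have hsplit := Finset.card_filter_add_card_filter_not
    (s := (Finset.univ : Finset (Fin n))) (p := fun i => c i ≠ 0)
  have heq : (Finset.univ.filter fun i => ¬ c i ≠ 0) =
      (Finset.univ.filter fun i => c i = 0) := by
    apply Finset.filter_congr; intro i _; simp
  rw [heq] at hsplit
  simp only [Finset.card_univ, Fintype.card_fin] at hsplit
  unfold hamWt at hd
  omega

lemma lb_parity {d : ℕ} (hodd : Odd d) (C : Submodule F (Fin n → F))
    (hC : IsCode 2 d C) (hl : HasLocality C 1) : d + 3 ≤ n := by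
  haveI := fd_of_code C hC
  have hcom : d + 2 ≤ n := lb_common C hC hl
  by_contra hlt
  have hn : n = d + 2 := by omega
  -- zero-set of any nonzero codeword has at most 2 elements
  have hsplit : ∀ c : Fin n → F, (Finset.univ.filter fun i => c i ≠ 0).card +
      (Finset.univ.filter fun i => c i = 0).card = n := by
    intro c
    have hsplit := Finset.card_filter_add_card_filter_not
      (s := (Finset.univ : Finset (Fin n))) (p := fun i => c i ≠ 0)
    have heq : (Finset.univ.filter fun i => ¬ c i ≠ 0) =
        (Finset.univ.filter fun i => c i = 0) := by
      apply Finset.filter_congr; intro i _; simp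
    rw [heq] at hsplit
    simpa using hsplit
  have h2Z : ∀ c ∈ C, c ≠ 0 → (Finset.univ.filter fun i => c i = 0).card ≤ 2 := by
    intro c hc hc0
    have hd := hC.2 c hc hc0
    have := hsplit c
    unfold hamWt at hd
    omega
  have h3 : ∀ c ∈ C, c ≠ 0 → ∀ i j l : Fin n, i ≠ j → i ≠ l → j ≠ l →
      c i = 0 → c j = 0 → c l = 0 → False := by
    intro c hc hc0 i j l hij hil hjl hi hj hl'
    have hsub : ({i, j, l} : Finset (Fin n)) ⊆ Finset.univ.filter fun i => c i = 0 := by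
      intro x hx
      simp only [Finset.mem_insert, Finset.mem_singleton] at hx
      rcases hx with rfl | rfl | rfl <;> simp [hi, hj, hl']
    have hcard3 : ({i, j, l} : Finset (Fin n)).card = 3 := by
      rw [Finset.card_insert_of_notMem (by simp [hij, hil]),
        Finset.card_insert_of_notMem (by simpa using hjl), Finset.card_singleton]
    have := Finset.card_le_card hsub
    rw [hcard3] at this
    have := h2Z c hc hc0
    omega
  -- every coordinate is nondegenerate
  have hnz : ∀ i : Fin n, ∃ c ∈ C, c i ≠ 0 := by
    intro istar
    by_contra hstar
    push_neg at hstar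
    obtain ⟨i₀, c₀, hc₀, hc₀i⟩ := exists_nondeg C hC
    rcases loc_dichotomy C hl i₀ with h | ⟨j, hji, himp⟩
    · exact absurd (h c₀ hc₀) hc₀i
    have hi₀star : i₀ ≠ istar := by
      intro h; subst h; exact hc₀i (hstar c₀ hc₀)
    have hjnz : ∃ c ∈ C, c j ≠ 0 := by
      by_contra hjz
      push_neg at hjz
      exact hc₀i (himp c₀ hc₀ (hjz c₀ hc₀))
    have hjstar : j ≠ istar := by
      intro h; subst h
      obtain ⟨c, hc, hcne⟩ := hjnz
      exact hcne (hstar c hc)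
    obtain ⟨c, hcC, hc0, hcj⟩ := ker_ev_nonzero C hC j
    exact h3 c hcC hc0 j i₀ istar hji hjstar (by simpa using hi₀star) hcj
      (himp c hcC hcj) (hstar c hcC)
  -- the kernels
  set K : Fin n → Submodule F ↥C := fun i => LinearMap.ker (evC C i) with hK
  have hK1 : ∀ i, Module.finrank F ↥(K i) = 1 := by
    intro i
    show Module.finrank F ↥(LinearMap.ker (evC C i)) = 1
    have hrn := LinearMap.finrank_range_add_finrank_ker (evC C i)
    rw [hC.1] at hrn
    have hr1 : Module.finrank F ↥(LinearMap.range (evC C i)) ≤ 1 := by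
      have := Submodule.finrank_le (LinearMap.range (evC C i))
      simpa [Module.finrank_self] using this
    have hrne : LinearMap.range (evC C i) ≠ ⊥ := by
      obtain ⟨c, hc, hci⟩ := hnz i
      intro hbot
      have : evC C i ⟨c, hc⟩ ∈ LinearMap.range (evC C i) := ⟨_, rfl⟩
      rw [hbot] at this
      simp only [Submodule.mem_bot] at this
      exact hci this
    have hrpos : 0 < Module.finrank F ↥(LinearMap.range (evC C i)) := by
      rcases Nat.eq_zero_or_pos (Module.finrank F ↥(LinearMap.range (evC C i))) with h0 | h
      · exact absurd (Submodule.finrank_eq_zero.mp h0) hrne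
      · exact h
    omega
  have hmemK : ∀ (i : Fin n) (v : ↥C), v ∈ K i ↔ (v : Fin n → F) i = 0 := by
    intro i v
    rw [hK]
    simp only [LinearMap.mem_ker]
    rfl
  have hpartner : ∀ i, ∃ j, j ≠ i ∧ K j = K i := by
    intro i
    rcases loc_dichotomy C hl i with h | ⟨j, hji, himp⟩
    · obtain ⟨c, hc, hci⟩ := hnz i
      exact absurd (h c hc) hci
    refine ⟨j, hji, ?_⟩
    have hle : K j ≤ K i := by
      intro v hv
      rw [hmemK] at hv ⊢
      exact himp v v.2 hv
    exact Submodule.eq_of_le_of_finrank_le hle (by rw [hK1 i, hK1 j])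
  have hfiber : ∀ i, (Finset.univ.filter fun j => K j = K i).card = 2 := by
    intro i
    apply le_antisymm
    · by_contra h
      push_neg at h
      obtain ⟨a, b, c', ha, hb, hc', hab, hac, hbc⟩ := Finset.two_lt_card_iff.mp h
      have hKne : K i ≠ ⊥ := by
        intro hbot
        have := hK1 i
        rw [hbot] at this
        simp [finrank_bot] at this
      obtain ⟨v, hvK, hv0⟩ := Submodule.ne_bot_iff _ |>.mp hKne
      have hva : (v : Fin n → F) a = 0 := by
        rw [← hmemK]; rw [(Finset.mem_filter.mp ha).2]; exact hvK
      have hvb : (v : Fin n → F) b = 0 := by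
        rw [← hmemK]; rw [(Finset.mem_filter.mp hb).2]; exact hvK
      have hvc : (v : Fin n → F) c' = 0 := by
        rw [← hmemK]; rw [(Finset.mem_filter.mp hc').2]; exact hvK
      exact h3 (v : Fin n → F) v.2 (by simpa using hv0) a b c' hab hac hbc hva hvb hvc
    · obtain ⟨j, hji, hKj⟩ := hpartner i
      have h12 : 1 < (Finset.univ.filter fun j' => K j' = K i).card :=
        Finset.one_lt_card.mpr ⟨j, by simp [hKj], i, by simp, hji⟩
      omega
  have hcount := Finset.card_eq_sum_card_fiberwise
    (f := K) (s := (Finset.univ : Finset (Fin n))) (t := Finset.univ.image K)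
    (fun x _ => Finset.mem_image_of_mem K (Finset.mem_univ x))
  have hsum : ∑ W ∈ Finset.univ.image K, (Finset.univ.filter fun j => K j = W).card
      = 2 * (Finset.univ.image K).card := by
    rw [Finset.sum_congr rfl ?_, Finset.sum_const, smul_eq_mul, mul_comm]
    intro W hW
    obtain ⟨i, _, rfl⟩ := Finset.mem_image.mp hW
    exact hfiber i
  rw [hsum] at hcount
  simp only [Finset.card_univ, Fintype.card_fin] at hcount
  obtain ⟨k, hk⟩ := hodd
  omega



lemma hamWt_split (c : Fin n → F) :
    (Finset.univ.filter fun i => c i ≠ 0).card +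
      (Finset.univ.filter fun i => c i = 0).card = n := by
  have hsplit := Finset.card_filter_add_card_filter_not
    (s := (Finset.univ : Finset (Fin n))) (p := fun i => c i ≠ 0)
  have heq : (Finset.univ.filter fun i => ¬ c i ≠ 0) =
      (Finset.univ.filter fun i => c i = 0) := by
    apply Finset.filter_congr; intro i _; simp
  rw [heq] at hsplit
  simpa using hsplit

lemma lb_count {q d : ℕ} (hq : 2 ≤ q) (hF : Nat.card F = q) (C : Submodule F (Fin n → F))
    (hC : IsCode 2 d C) : d ≤ n ∧ (q + 1) * d ≤ q * n := by
  haveI : Finite F := Nat.finite_of_card_ne_zero (by omega)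
  haveI := Fintype.ofFinite F
  haveI : Fintype ↥C := Fintype.ofFinite _
  have hFq : Fintype.card F = q := by rw [← Nat.card_eq_fintype_card, hF]
  have hcardC : Fintype.card ↥C = q ^ 2 := by
    rw [Module.card_eq_pow_finrank (K := F) (V := ↥C), hC.1, hFq]
  have hdn : d ≤ n := by
    obtain ⟨i, c, hc, hci⟩ := exists_nondeg C hC
    have hc0 : c ≠ 0 := fun h => hci (by rw [h]; rfl)
    have := hC.2 c hc hc0
    unfold hamWt at this
    have hle : (Finset.univ.filter fun i => c i ≠ 0).card ≤ n := by
      refine le_trans (Finset.card_le_card (Finset.filter_subset _ _)) ?_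
      simp
    omega
  refine ⟨hdn, ?_⟩
  set S : Finset ↥C := Finset.univ.filter (fun v : ↥C => v ≠ 0) with hS
  have hcardS : S.card = q ^ 2 - 1 := by
    rw [hS, Finset.filter_ne', Finset.card_erase_of_mem (Finset.mem_univ _),
      Finset.card_univ, hcardC]
  -- the double counting
  have hswap : ∑ v ∈ S, (Finset.univ.filter fun i => (v : Fin n → F) i = 0).card
      = ∑ i : Fin n, (S.filter fun v : ↥C => (v : Fin n → F) i = 0).card := by
    simp_rw [Finset.card_filter]
    exact Finset.sum_comm
  have hub : ∑ v ∈ S, (Finset.univ.filter fun i => (v : Fin n → F) i = 0).card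
      ≤ (q ^ 2 - 1) * (n - d) := by
    rw [← hcardS]
    refine Finset.sum_le_card_nsmul _ _ _ ?_
    intro v hv
    have hvC : (v : Fin n → F) ∈ C := v.2
    have hv0 : (v : Fin n → F) ≠ 0 := by
      intro h
      rw [hS] at hv
      exact (Finset.mem_filter.mp hv).2 (Submodule.coe_eq_zero.mp h)
    have hd := hC.2 _ hvC hv0
    have := hamWt_split (v : Fin n → F)
    unfold hamWt at hd
    omega
  have hlb : ∀ i : Fin n, q - 1 ≤ (S.filter fun v : ↥C => (v : Fin n → F) i = 0).card := by
    intro i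
    set A : Finset ↥C := Finset.univ.filter (fun v : ↥C => (v : Fin n → F) i = 0) with hA
    have hAq : q ≤ A.card := by
      obtain ⟨c, hcC, hc0, hci⟩ := ker_ev_nonzero C hC i
      set v : ↥C := ⟨c, hcC⟩ with hv
      have hvne : v ≠ 0 := by
        intro h
        exact hc0 (by simpa [hv] using congrArg Subtype.val h)
      have hmaps : ∀ a ∈ (Finset.univ : Finset F), a • v ∈ A := by
        intro a _
        simp [hA, hv, hci]
      have hinj : Set.InjOn (fun a : F => a • v) (Finset.univ : Finset F) := by
        intro a _ b _ hab
        exact smul_left_injective F hvne hab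
      have := Finset.card_le_card_of_injOn _ hmaps hinj
      simpa [hFq] using this
    have hfe : S.filter (fun v : ↥C => (v : Fin n → F) i = 0) = A.erase 0 := by
      ext v
      rw [hS, hA]
      simp only [Finset.mem_filter, Finset.mem_univ, true_and, Finset.mem_erase]
    rw [hfe, Finset.card_erase_of_mem]
    · omega
    · rw [hA]; simp
  have hmain : n * (q - 1) ≤ (q ^ 2 - 1) * (n - d) := by
    calc n * (q - 1) = ∑ _i : Fin n, (q - 1) := by
          rw [Finset.sum_const, Finset.card_univ, Fintype.card_fin, smul_eq_mul]
      _ ≤ ∑ i : Fin n, (S.filter fun v : ↥C => (v : Fin n → F) i = 0).card :=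
          Finset.sum_le_sum (fun i _ => hlb i)
      _ = ∑ v ∈ S, (Finset.univ.filter fun i => (v : Fin n → F) i = 0).card := hswap.symm
      _ ≤ (q ^ 2 - 1) * (n - d) := hub
  -- now pure arithmetic
  have hqz : (2 : ℤ) ≤ (q : ℤ) := by exact_mod_cast hq
  have h1q : 1 ≤ q := by omega
  have h1q2 : 1 ≤ q ^ 2 := Nat.one_le_pow _ _ (by omega)
  zify [hdn, h1q, h1q2] at hmain
  have key : ((q : ℤ) - 1) * (((q : ℤ) + 1) * (d : ℤ)) ≤ ((q : ℤ) - 1) * ((q : ℤ) * (n : ℤ)) := by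
    nlinarith [hmain]
  have hfin : ((q : ℤ) + 1) * (d : ℤ) ≤ (q : ℤ) * (n : ℤ) :=
    le_of_mul_le_mul_left key (by linarith)
  exact_mod_cast hfin

end LB


section Final

lemma ceil_half_facts (d : ℕ) (hd : 1 ≤ d) :
    d ≤ 2 * ⌈(d : ℚ) / 2⌉₊ ∧ 2 * ⌈(d : ℚ) / 2⌉₊ ≤ d + 1 := by
  constructor
  · have h := Nat.le_ceil ((d : ℚ) / 2)
    have : (d : ℚ) ≤ 2 * (⌈(d : ℚ) / 2⌉₊ : ℚ) := by
      rw [div_le_iff₀ (by norm_num : (0:ℚ) < 2)] at h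
      linarith
    exact_mod_cast this
  · have h := Nat.ceil_lt_add_one (by positivity : (0:ℚ) ≤ (d : ℚ) / 2)
    have : 2 * (⌈(d : ℚ) / 2⌉₊ : ℚ) < (d : ℚ) + 2 := by
      nlinarith
    have h2 : 2 * ⌈(d : ℚ) / 2⌉₊ < d + 2 := by exact_mod_cast this
    omega

lemma ceil_q_facts (q d : ℕ) (hq : 2 ≤ q) :
    d ≤ q * ⌈(d : ℚ) / q⌉₊ ∧ q * ⌈(d : ℚ) / q⌉₊ < d + q := by
  have hq0 : (0:ℚ) < (q:ℚ) := by positivity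
  constructor
  · have h := Nat.le_ceil ((d : ℚ) / q)
    have : (d : ℚ) ≤ (q:ℚ) * (⌈(d : ℚ) / q⌉₊ : ℚ) := by
      rw [div_le_iff₀ hq0] at h
      linarith
    exact_mod_cast this
  · have h := Nat.ceil_lt_add_one (by positivity : (0:ℚ) ≤ (d : ℚ) / q)
    have h3 : (q:ℚ) * (⌈(d : ℚ) / q⌉₊ : ℚ) < (d : ℚ) + q := by
      have h4 : (q:ℚ) * ((d:ℚ)/q + 1) = (d:ℚ) + q := by field_simp
      nlinarith
    exact_mod_cast h3

lemma mem_case1 (q d : ℕ) (hq : IsPrimePow q) (hd : 1 ≤ d) (hlt : d < 2 * q) :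
    LRCExists q (2 * ⌈(d : ℚ) / 2⌉₊ + 2) 2 d 1 := by
  obtain ⟨p, k, hp, hk, rfl⟩ := hq
  haveI : Fact p.Prime := ⟨hp.nat_prime⟩
  set q := p ^ k with hqdef
  have hq2 : 2 ≤ q := by
    have h1 := hp.nat_prime.two_le
    have h2 : p ≤ p ^ k := Nat.le_self_pow hk.ne' p
    omega
  set c := ⌈(d : ℚ) / 2⌉₊ with hc
  obtain ⟨hc1, hc2⟩ := ceil_half_facts d hd
  rw [← hc] at hc1 hc2
  have hcq : c ≤ q := by omega
  set n := 2 * c + 2 with hn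
  set M := c + 1 with hM
  have hF : Nat.card (GaloisField p k) = q := GaloisField.card p k hk.ne'
  haveI : Fintype (GaloisField p k) := Fintype.ofFinite _
  have hFc : Fintype.card (GaloisField p k) = q := by
    rw [← Nat.card_eq_fintype_card, hF]
  have hcons := myConstruction (F := GaloisField p k) q hFc
    (n := n) (M := M) (by omega)
    (fun i => ⟨i.val / 2, by omega⟩) d (by omega)
    ?_ ?_ ?_
  · obtain ⟨C, hC, hl⟩ := hcons
    exact ⟨GaloisField p k, inferInstance, hF, C, hC, hl⟩
  · intro i
    by_cases h : i.val % 2 = 0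
    · have hb : i.val + 1 < n := by omega
      refine ⟨⟨i.val + 1, hb⟩, ?_, ?_⟩
      · intro hji
        have := congrArg Fin.val hji
        simp at this
      · apply Fin.ext
        show (i.val + 1) / 2 = i.val / 2
        omega
    · have hb : i.val - 1 < n := by omega
      refine ⟨⟨i.val - 1, hb⟩, ?_, ?_⟩
      · intro hji
        have := congrArg Fin.val hji
        simp at this
        omega
      · apply Fin.ext
        show (i.val - 1) / 2 = i.val / 2
        omega
  · intro t
    refine le_trans (Finset.card_le_card_of_injOn (fun i : Fin n => i.val)
      (t := ({2 * t.val, 2 * t.val + 1} : Finset ℕ)) ?_ ?_) ?_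
    · intro i hi
      have hit : i.val / 2 = t.val := congrArg Fin.val (Finset.mem_filter.mp hi).2
      simp only [Finset.mem_coe, Finset.mem_insert, Finset.mem_singleton]
      omega
    · intro a _ b _ hab
      exact Fin.ext hab
    · refine le_trans (Finset.card_insert_le _ _) ?_
      simp only [Finset.card_singleton]
      omega
  · refine ⟨⟨0, by omega⟩, ⟨2 * c, by omega⟩, ?_⟩
    intro h
    have := congrArg Fin.val h
    simp only at this
    omega

lemma mem_case2 (q d : ℕ) (hq : IsPrimePow q) (hd2 : 2 * q ≤ d) :
    LRCExists q (d + ⌈(d : ℚ) / q⌉₊) 2 d 1 := by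
  obtain ⟨p, k, hp, hk, rfl⟩ := hq
  haveI : Fact p.Prime := ⟨hp.nat_prime⟩
  set q := p ^ k with hqdef
  have hq2 : 2 ≤ q := by
    have h1 := hp.nat_prime.two_le
    have h2 : p ≤ p ^ k := Nat.le_self_pow hk.ne' p
    omega
  set m := ⌈(d : ℚ) / q⌉₊ with hm
  obtain ⟨hm1, hm2⟩ := ceil_q_facts q d hq2
  rw [← hm] at hm1 hm2
  have hm2' : 2 ≤ m := by nlinarith
  set n := d + m with hn
  have hnM : n ≤ (q + 1) * m := by
    have : (q + 1) * m = q * m + m := by ring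
    omega
  have h2M : 2 * (q + 1) ≤ n := by omega
  have hF : Nat.card (GaloisField p k) = q := GaloisField.card p k hk.ne'
  haveI : Fintype (GaloisField p k) := Fintype.ofFinite _
  have hFc : Fintype.card (GaloisField p k) = q := by
    rw [← Nat.card_eq_fintype_card, hF]
  have hcons := myConstruction (F := GaloisField p k) q hFc
    (n := n) (M := q + 1) (le_refl _)
    (fun i => ⟨i.val % (q + 1), Nat.mod_lt _ (by omega)⟩) d (by omega)
    ?_ ?_ ?_
  · obtain ⟨C, hC, hl⟩ := hcons
    exact ⟨GaloisField p k, inferInstance, hF, C, hC, hl⟩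
  · intro i
    by_cases h : i.val < q + 1
    · have hb : i.val + (q + 1) < n := by omega
      refine ⟨⟨i.val + (q + 1), hb⟩, ?_, ?_⟩
      · intro hji
        have := congrArg Fin.val hji
        simp only at this
        omega
      · apply Fin.ext
        show (i.val + (q + 1)) % (q + 1) = i.val % (q + 1)
        exact Nat.add_mod_right _ _
    · have hb : i.val - (q + 1) < n := by omega
      refine ⟨⟨i.val - (q + 1), hb⟩, ?_, ?_⟩
      · intro hji
        have := congrArg Fin.val hji
        simp only at this
        omega
      · apply Fin.ext
        show (i.val - (q + 1)) % (q + 1) = i.val % (q + 1)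
        conv_rhs => rw [show i.val = (i.val - (q + 1)) + (q + 1) by omega]
        rw [Nat.add_mod_right]
  · intro t
    refine le_trans (Finset.card_le_card_of_injOn (fun i : Fin n => i.val / (q + 1))
      (t := Finset.range m) ?_ ?_) ?_
    · intro i hi
      simp only [Finset.mem_coe, Finset.mem_range]
      rw [Nat.div_lt_iff_lt_mul (by omega : 0 < q + 1)]
      calc i.val < n := i.2
        _ ≤ (q + 1) * m := hnM
        _ = m * (q + 1) := by ring
    · intro a ha b hb hab
      have hat : a.val % (q + 1) = t.val := congrArg Fin.val (Finset.mem_filter.mp ha).2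
      have hbt : b.val % (q + 1) = t.val := congrArg Fin.val (Finset.mem_filter.mp hb).2
      apply Fin.ext
      have h1 := Nat.div_add_mod a.val (q + 1)
      have h2 := Nat.div_add_mod b.val (q + 1)
      have h3 : (q + 1) * (a.val / (q + 1)) = (q + 1) * (b.val / (q + 1)) := by
        rw [show a.val / (q + 1) = b.val / (q + 1) from hab]
      omega
    · simp only [Finset.card_range]
      omega
  · refine ⟨⟨0, by omega⟩, ⟨1, by omega⟩, ?_⟩
    intro h
    have := congrArg Fin.val h
    simp only [Nat.zero_mod] at this
    rw [Nat.mod_eq_of_lt (by omega)] at this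
    omega

end Final

theorem n_dim2_r1 (q d : ℕ) (hq : IsPrimePow q) (hd : 1 ≤ d) :
    (d < 2 * q → nLRC q 2 d 1 = 2 * ⌈(d : ℚ) / 2⌉₊ + 2) ∧
    (2 * q ≤ d → nLRC q 2 d 1 = d + ⌈(d : ℚ) / (q : ℚ)⌉₊) := by
  have hq2 : 2 ≤ q := by
    obtain ⟨p, k, hp, hk, rfl⟩ := hq
    have h1 := hp.nat_prime.two_le
    have h2 : p ≤ p ^ k := Nat.le_self_pow hk.ne' p
    omega
  constructor
  · intro hlt
    have hmem : (2 * ⌈(d : ℚ) / 2⌉₊ + 2) ∈ {n | LRCExists q n 2 d 1} :=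
      mem_case1 q d hq hd hlt
    apply le_antisymm
    · exact Nat.sInf_le hmem
    · apply le_csInf ⟨_, hmem⟩
      intro n hn
      rw [Set.mem_setOf_eq] at hn
      unfold LRCExists at hn
      obtain ⟨F, hfield, hcard, C, hC, hl⟩ := hn
      letI := hfield
      obtain ⟨hc1, hc2⟩ := ceil_half_facts d hd
      rcases Nat.even_or_odd d with ⟨a, ha⟩ | ⟨a, ha⟩
      · have := lb_common C hC hl
        omega
      · have := lb_parity ⟨a, ha⟩ C hC hl
        omega
  · intro hge
    have hmem : (d + ⌈(d : ℚ) / (q : ℚ)⌉₊) ∈ {n | LRCExists q n 2 d 1} :=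
      mem_case2 q d hq hge
    apply le_antisymm
    · exact Nat.sInf_le hmem
    · apply le_csInf ⟨_, hmem⟩
      intro n hn
      rw [Set.mem_setOf_eq] at hn
      unfold LRCExists at hn
      obtain ⟨F, hfield, hcard, C, hC, hl⟩ := hn
      letI := hfield
      obtain ⟨hdn, hqn⟩ := lb_count hq2 hcard C hC
      obtain ⟨hm1, hm2⟩ := ceil_q_facts q d hq2
      have h1 : q * d + d ≤ q * n := by
        have h0 : (q + 1) * d = q * d + d := by ring
        omega
      have h3 : q * (n - d) + q * d = q * n := by
        rw [← Nat.mul_add]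
        congr 1
        omega
      have h2 : d ≤ (n - d) * q := by
        rw [Nat.mul_comm]
        omega
      have hmle : ⌈(d : ℚ) / q⌉₊ ≤ n - d := by
        rw [Nat.ceil_le, div_le_iff₀ (by positivity : (0:ℚ) < (q:ℚ))]
        exact_mod_cast h2
      omega
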